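/- (Group-theoretic form of Theorem 1.) Let n ≥ 1, r ≥ 1, and let m_1,…,m_r and d_1,…,d_r be positive integers. Let A = (ℤ/m_1ℤ) ⊕ ⋯ ⊕ (ℤ/m_rℤ), x = (d_1 mod m_1, …, d_r mod m_r) ∈ A, and Q = A/⟨x⟩. Then the following are equivalent: (i) for every subset B ⊆ {1,…,r} with |B| ≤ n, the canonical homomorphism ⨁_{i∈B} ℤ/m_iℤ → Q (inclusion into A followed by the quotient projection) is injective; (ii) the tuple (f_1,…,f_r) satisfies the divisibility condition with parameter n, where f_i = m_i / gcd(m_i, d_i). -/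

import Mathlib

/-- The extension-by-zero homomorphism `⨁_{i ∈ B} ℤ/mᵢℤ → ⨁_{i} ℤ/mᵢℤ`. -/
def extendByZero {r : ℕ} (m : Fin r → ℕ) (B : Finset (Fin r)) :
    ((i : {x // x ∈ B}) → ZMod (m i.1)) →+ ((i : Fin r) → ZMod (m i)) where
  toFun y i := if h : i ∈ B then y ⟨i, h⟩ else 0
  map_zero' := by funext i; by_cases h : i ∈ B <;> simp [h]
  map_add' a b := by funext i; by_cases h : i ∈ B <;> simp [h]

/-- `(f₁, …, f_r)` satisfies the divisibility condition with parameter `n`: for every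
prime `p`, every `k ≥ 1` and every index `i`, if `p^k ∣ fᵢ` then `p^k` divides `f_j`
for at least `n` indices `j ≠ i`. -/
def DivisibilityCondition {r : ℕ} (f : Fin r → ℕ) (n : ℕ) : Prop :=
  ∀ p : ℕ, p.Prime → ∀ k : ℕ, 1 ≤ k → ∀ i : Fin r, p ^ k ∣ f i →
    n ≤ (Finset.univ.filter (fun j : Fin r => j ≠ i ∧ p ^ k ∣ f j)).card

lemma extendByZero_apply {r : ℕ} (m : Fin r → ℕ) (B : Finset (Fin r))
    (y : (i : {x // x ∈ B}) → ZMod (m i.1)) (i : Fin r) :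
    extendByZero m B y i = if h : i ∈ B then y ⟨i, h⟩ else 0 := rfl

lemma pow_dvd_nat_lcm_iff {a b p k : ℕ} (ha : a ≠ 0) (hb : b ≠ 0) (hp : p.Prime) :
    p ^ k ∣ Nat.lcm a b ↔ p ^ k ∣ a ∨ p ^ k ∣ b := by
  rw [hp.pow_dvd_iff_le_factorization (Nat.lcm_ne_zero ha hb),
    hp.pow_dvd_iff_le_factorization ha, hp.pow_dvd_iff_le_factorization hb,
    Nat.factorization_lcm ha hb, Finsupp.sup_apply, le_sup_iff]

lemma pow_dvd_finsetLcm_iff {ι : Type*} {s : Finset ι} {f : ι → ℕ}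
    (hf : ∀ j, f j ≠ 0) {p k : ℕ} (hp : p.Prime) (hk : 1 ≤ k) :
    p ^ k ∣ s.lcm f ↔ ∃ j ∈ s, p ^ k ∣ f j := by
  classical
  induction s using Finset.induction with
  | empty =>
    simp only [Finset.lcm_empty, Nat.dvd_one, Finset.notMem_empty, false_and, exists_false,
      iff_false, pow_eq_one_iff_left (by omega : k ≠ 0)]
    exact hp.ne_one
  | @insert a s hnotmem ih =>
    have hlcm : s.lcm f ≠ 0 := by
      intro h
      have := Finset.lcm_eq_zero_iff.mp h
      obtain ⟨j, _, hj⟩ := this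
      exact hf j hj
    rw [Finset.lcm_insert, lcm_eq_nat_lcm, pow_dvd_nat_lcm_iff (hf a) hlcm hp, ih]
    constructor
    · rintro (h | ⟨j, hj, hjd⟩)
      · exact ⟨a, Finset.mem_insert_self _ _, h⟩
      · exact ⟨j, Finset.mem_insert_of_mem hj, hjd⟩
    · rintro ⟨j, hj, hjd⟩
      rcases Finset.mem_insert.mp hj with rfl | hj
      · exact Or.inl hjd
      · exact Or.inr ⟨j, hj, hjd⟩

/-- Group-theoretic form of Theorem 1: with `A = ⨁ᵢ ℤ/mᵢℤ`, `x = (dᵢ mod mᵢ)ᵢ` and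
`Q = A/⟨x⟩`, the canonical homomorphism `⨁_{i ∈ B} ℤ/mᵢℤ → Q` is injective for every
`B` with `|B| ≤ n` iff `(f₁, …, f_r)` with `fᵢ = mᵢ / gcd(mᵢ, dᵢ)` satisfies the
divisibility condition with parameter `n`. -/
theorem abelian_uniformization_injectivity_iff_divisibility
    (n r : ℕ) (hn : 1 ≤ n) (hr : 1 ≤ r) (m d : Fin r → ℕ)
    (hm : ∀ i, 0 < m i) (hd : ∀ i, 0 < d i) :
    (∀ B : Finset (Fin r), B.card ≤ n →
      Function.Injective
        ((QuotientAddGroup.mk'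
            (AddSubgroup.zmultiples (fun i : Fin r => (d i : ZMod (m i))))).comp
          (extendByZero m B))) ↔
    DivisibilityCondition (fun i : Fin r => m i / Nat.gcd (m i) (d i)) n := by
  classical
  set f : Fin r → ℕ := fun i => m i / Nat.gcd (m i) (d i) with hfdef
  set x : (i : Fin r) → ZMod (m i) := fun i => (d i : ZMod (m i)) with hxdef
  have hford : ∀ i, addOrderOf (x i) = f i := fun i =>
    ZMod.addOrderOf_coe (d i) (hm i).ne'
  have hfpos : ∀ i, 0 < f i := fun i =>
    Nat.div_pos (Nat.le_of_dvd (hm i) (Nat.gcd_dvd_left _ _))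
      (Nat.gcd_pos_of_pos_left _ (hm i))
  have hsmul : ∀ (z : ℤ) (i : Fin r), z • (x i) = 0 ↔ (f i : ℤ) ∣ z := by
    intro z i
    rw [← addOrderOf_dvd_iff_zsmul_eq_zero, hford i]
  -- Step 1: reformulate injectivity.
  have inj_iff : ∀ B : Finset (Fin r),
      Function.Injective
        ((QuotientAddGroup.mk' (AddSubgroup.zmultiples x)).comp (extendByZero m B)) ↔
      ∀ z : ℤ, (∀ i ∉ B, (f i : ℤ) ∣ z) → ∀ i, (f i : ℤ) ∣ z := by
    intro B
    constructor
    · intro hinj z hz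
      set y : (i : {a // a ∈ B}) → ZMod (m i.1) := fun i => z • x i.1 with hy
      have h1 : extendByZero m B y = z • x := by
        funext i
        rw [extendByZero_apply]
        by_cases h : i ∈ B
        · simp [h, hy]
        · rw [dif_neg h, Pi.smul_apply]
          exact ((hsmul z i).mpr (hz i h)).symm
      have h2 : ((QuotientAddGroup.mk' (AddSubgroup.zmultiples x)).comp
          (extendByZero m B)) y = 0 := by
        rw [AddMonoidHom.comp_apply, QuotientAddGroup.mk'_apply,
          QuotientAddGroup.eq_zero_iff]
        rw [h1]
        exact AddSubgroup.mem_zmultiples_iff.mpr ⟨z, rfl⟩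
      have h3 : y = 0 := hinj (by simpa using h2)
      intro i
      by_cases h : i ∈ B
      · have : y ⟨i, h⟩ = 0 := by rw [h3]; rfl
        exact (hsmul z i).mp (by simpa [hy] using this)
      · exact hz i h
    · intro H
      rw [injective_iff_map_eq_zero]
      intro y hy0
      rw [AddMonoidHom.comp_apply, QuotientAddGroup.mk'_apply,
        QuotientAddGroup.eq_zero_iff] at hy0
      obtain ⟨z, hz⟩ := AddSubgroup.mem_zmultiples_iff.mp hy0
      have hout : ∀ i ∉ B, (f i : ℤ) ∣ z := by
        intro i hi
        apply (hsmul z i).mp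
        have h := congrFun hz i
        rwa [extendByZero_apply, dif_neg hi, Pi.smul_apply] at h
      have hall := H z hout
      funext i
      have h0 : z • x i.1 = 0 := (hsmul z i.1).mpr (hall i.1)
      have h2 := congrFun hz i.1
      rw [extendByZero_apply, dif_pos i.2, Pi.smul_apply] at h2
      have : y ⟨i.1, i.2⟩ = 0 := by rw [← h2, h0]
      simpa using this
  simp only [inj_iff]
  constructor
  · -- injectivity ⇒ divisibility condition
    intro H p hp k hk i hpk
    by_contra hcard
    push_neg at hcard
    set S := Finset.univ.filter (fun j : Fin r => j ≠ i ∧ p ^ k ∣ f j) with hS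
    have hiS : i ∉ S := by simp [hS]
    set B := insert i S with hB
    have hBcard : B.card ≤ n := by
      rw [hB, Finset.card_insert_of_notMem hiS]
      omega
    set N : ℕ := (Finset.univ \ B).lcm f with hN
    have hNz : ∀ j ∉ B, (f j : ℤ) ∣ (N : ℤ) := by
      intro j hj
      exact Int.natCast_dvd_natCast.mpr (Finset.dvd_lcm (by simp [hj]))
    have hfiN : f i ∣ N :=
      Int.natCast_dvd_natCast.mp (H B hBcard (N : ℤ) hNz i)
    have hnot : ¬ p ^ k ∣ N := by
      rw [hN, pow_dvd_finsetLcm_iff (fun j => (hfpos j).ne') hp hk]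
      rintro ⟨j, hjmem, hjdvd⟩
      rw [Finset.mem_sdiff] at hjmem
      apply hjmem.2
      rw [hB, Finset.mem_insert]
      by_cases hji : j = i
      · exact Or.inl hji
      · exact Or.inr (by simp [hS, hji, hjdvd])
    exact hnot (dvd_trans hpk hfiN)
  · -- divisibility condition ⇒ injectivity
    intro hdc B hBcard z hz i
    rw [Int.natCast_dvd]
    rw [Nat.dvd_iff_prime_pow_dvd_dvd]
    intro p k hp hpk
    rcases Nat.eq_zero_or_pos k with rfl | hk
    · simpa using one_dvd _
    by_cases hiB : i ∈ B
    · have hcard := hdc p hp k hk i hpk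
      set S := Finset.univ.filter (fun j : Fin r => j ≠ i ∧ p ^ k ∣ f j) with hS
      -- find j ∈ S with j ∉ B
      have : ∃ j, j ∈ S ∧ j ∉ B := by
        by_contra h
        push_neg at h
        have hsub : S ⊆ B.erase i := by
          intro j hj
          have hj' : j ≠ i ∧ p ^ k ∣ f j := by simpa [hS] using hj
          exact Finset.mem_erase.mpr ⟨hj'.1, h j hj⟩
        have h1 : S.card ≤ (B.erase i).card := Finset.card_le_card hsub
        have h2 : (B.erase i).card = B.card - 1 := Finset.card_erase_of_mem hiB
        have h3 : n ≤ S.card := hcard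
        have h4 : 1 ≤ B.card := Finset.card_pos.mpr ⟨i, hiB⟩
        omega
      obtain ⟨j, hjS, hjB⟩ := this
      have hj' : j ≠ i ∧ p ^ k ∣ f j := by simpa [hS] using hjS
      exact dvd_trans hj'.2 (Int.natCast_dvd.mp (hz j hjB))
    · exact dvd_trans hpk (Int.natCast_dvd.mp (hz i hiB))
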